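/- Let f ∈ C[0,1]. If a_0(n), a_1(n) are bounded convergent sequences satisfying 2a_0(n) + a_1(n) = 1 and, for all n, either a_0(n) < 0 or a_1(n) + a_0(n) < 0 (so that D_n^{M,1} is not a positive operator), then D_n^{M,1}(f; x) converges to f(x) uniformly on [0,1] as n → ∞. -/

import Mathlib

open Filter Topology intervalIntegral

set_option maxHeartbeats 1000000

/-- Bernstein basis polynomial `p_{n,k}(x)`, zero when `k < 0` or `k > n`. -/
noncomputable def bern (n : ℕ) (k : ℤ) (x : ℝ) : ℝ :=
  if 0 ≤ k ∧ k ≤ (n : ℤ) then (n.choose k.toNat : ℝ) * x ^ k.toNat * (1 - x) ^ (n - k.toNat)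
  else 0

/-- Modified Bernstein basis `p_{n,k}^{M,1}(x)` of Khosravian-Arab et al. -/
noncomputable def pM1 (a0 a1 : ℕ → ℝ) (n : ℕ) (k : ℤ) (x : ℝ) : ℝ :=
  (a1 n * x + a0 n) * bern (n - 1) k x + (a1 n * (1 - x) + a0 n) * bern (n - 1) (k - 1) x

/-- First-order modified Durrmeyer operator `D_n^{M,1}(f;x)`. -/
noncomputable def DM1 (a0 a1 : ℕ → ℝ) (n : ℕ) (f : ℝ → ℝ) (x : ℝ) : ℝ :=
  ((n : ℝ) + 1) * ∑ k ∈ Finset.range (n + 1),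
    pM1 a0 a1 n k x * ∫ t in (0:ℝ)..1, bern n k t * f t

lemma bern_nat (n k : ℕ) (hk : k ≤ n) (x : ℝ) :
    bern n (k : ℤ) x = (n.choose k : ℝ) * x ^ k * (1 - x) ^ (n - k) := by
  simp [bern, hk, Int.toNat_natCast]

lemma bern_of_gt (n : ℕ) (k : ℤ) (hk : (n : ℤ) < k) (x : ℝ) : bern n k x = 0 := by
  rw [bern, if_neg]; rintro ⟨-, h⟩; omega

lemma bern_of_neg (n : ℕ) (k : ℤ) (hk : k < 0) (x : ℝ) : bern n k x = 0 := by
  rw [bern, if_neg]; rintro ⟨h, -⟩; omega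

lemma bern_nonneg (n : ℕ) (k : ℤ) {x : ℝ} (h0 : 0 ≤ x) (h1 : x ≤ 1) :
    0 ≤ bern n k x := by
  unfold bern
  split
  · have : (0:ℝ) ≤ 1 - x := by linarith
    positivity
  · exact le_refl 0

lemma bern_continuous (n : ℕ) (k : ℤ) : Continuous (fun x => bern n k x) := by
  by_cases h : 0 ≤ k ∧ k ≤ (n : ℤ)
  · simp only [bern, if_pos h]; continuity
  · simp only [bern, if_neg h]; exact continuous_const

lemma bern_eval (n k : ℕ) (x : ℝ) :
    (bernsteinPolynomial ℝ n k).eval x = (n.choose k : ℝ) * x ^ k * (1 - x) ^ (n - k) := by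
  simp [bernsteinPolynomial]

lemma bern_sum (n : ℕ) (x : ℝ) :
    ∑ k ∈ Finset.range (n + 1), bern n (k : ℤ) x = 1 := by
  have h := congrArg (Polynomial.eval x) (bernsteinPolynomial.sum ℝ n)
  rw [Polynomial.eval_finset_sum] at h
  simp only [Polynomial.eval_one] at h
  rw [← h]
  refine Finset.sum_congr rfl fun k hk => ?_
  rw [bern_nat n k (Nat.lt_succ_iff.mp (Finset.mem_range.mp hk)), bern_eval]
open Filter Topology intervalIntegral
set_option maxHeartbeats 1000000
lemma bern_sum_k (n : ℕ) (x : ℝ) :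
    ∑ k ∈ Finset.range (n + 1), (k : ℝ) * bern n (k : ℤ) x = n * x := by
  have h := congrArg (Polynomial.eval x) (bernsteinPolynomial.sum_smul ℝ n)
  rw [Polynomial.eval_finset_sum] at h
  simp only [nsmul_eq_mul, Polynomial.eval_mul, Polynomial.eval_natCast, Polynomial.eval_X] at h
  rw [← h]
  refine Finset.sum_congr rfl fun k hk => ?_
  rw [bern_nat n k (Nat.lt_succ_iff.mp (Finset.mem_range.mp hk)), bern_eval]

lemma bern_sum_kk (n : ℕ) (x : ℝ) :
    ∑ k ∈ Finset.range (n + 1), (k : ℝ) * ((k : ℝ) - 1) * bern n (k : ℤ) x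
      = (n : ℝ) * ((n : ℝ) - 1) * x ^ 2 := by
  have h := congrArg (Polynomial.eval x) (bernsteinPolynomial.sum_mul_smul ℝ n)
  rw [Polynomial.eval_finset_sum] at h
  simp only [nsmul_eq_mul, Polynomial.eval_mul, Polynomial.eval_natCast, Polynomial.eval_pow, Polynomial.eval_X] at h
  have e : ∀ m : ℕ, ((m * (m - 1) : ℕ) : ℝ) = (m : ℝ) * ((m : ℝ) - 1) := by
    intro m
    rcases m with - | m
    · simp
    · push_cast [Nat.succ_sub_one]; ring
  rw [show ((n:ℝ) * ((n:ℝ) - 1) * x ^ 2) = ((n * (n-1) : ℕ) : ℝ) * x ^ 2 by rw [e]]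
  rw [← h]
  refine Finset.sum_congr rfl fun k hk => ?_
  rw [bern_nat n k (Nat.lt_succ_iff.mp (Finset.mem_range.mp hk)), bern_eval, e]

lemma beta_nat (a b : ℕ) :
    ∫ x in (0:ℝ)..1, x ^ a * (1 - x) ^ b
      = (a.factorial : ℝ) * b.factorial / (a + b + 1).factorial := by
  induction b generalizing a with
  | zero =>
    simp only [pow_zero, mul_one, integral_pow, one_pow, Nat.factorial_zero]
    rw [Nat.factorial_succ]
    push_cast
    rw [zero_pow (by omega)]
    have : ((a:ℝ) + 1) ≠ 0 := by positivity
    field_simp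
    norm_num
  | succ b ih =>
    have hderiv : ∀ x ∈ Set.uIcc (0:ℝ) 1,
        HasDerivAt (fun y : ℝ => y ^ (a+1) * (1 - y) ^ (b+1))
          ((a+1:ℝ) * x ^ a * (1 - x) ^ (b+1) - (b+1:ℝ) * (x ^ (a+1) * (1 - x) ^ b)) x := by
      intro x _
      have h1 : HasDerivAt (fun y : ℝ => y ^ (a+1)) ((a+1:ℝ) * x ^ a) x := by
        simpa using hasDerivAt_pow (a+1) x
      have hin : HasDerivAt (fun y : ℝ => 1 - y) (-1) x := by
        simpa using (hasDerivAt_id x).const_sub 1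
      have h2 : HasDerivAt (fun y : ℝ => (1 - y) ^ (b+1))
          (-((b+1:ℝ) * (1 - x) ^ b)) x := by
        have h3 := (hasDerivAt_pow (b+1) (1 - x)).comp x hin
        refine h3.congr_deriv ?_
        push_cast
        ring
      have h4 := h1.mul h2
      refine h4.congr_deriv ?_
      push_cast
      ring
    have hcont : Continuous fun x : ℝ =>
        (a+1:ℝ) * x ^ a * (1 - x) ^ (b+1) - (b+1:ℝ) * (x ^ (a+1) * (1 - x) ^ b) := by
      fun_prop
    have hii : IntervalIntegrable (fun x : ℝ =>
        (a+1:ℝ) * x ^ a * (1 - x) ^ (b+1) - (b+1:ℝ) * (x ^ (a+1) * (1 - x) ^ b))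
        MeasureTheory.volume 0 1 := hcont.intervalIntegrable 0 1
    have hint : (∫ x in (0:ℝ)..1,
        ((a+1:ℝ) * x ^ a * (1 - x) ^ (b+1) - (b+1:ℝ) * (x ^ (a+1) * (1 - x) ^ b)))
        = (fun y : ℝ => y ^ (a+1) * (1 - y) ^ (b+1)) 1
          - (fun y : ℝ => y ^ (a+1) * (1 - y) ^ (b+1)) 0 :=
      integral_eq_sub_of_hasDerivAt hderiv hii
    have hz : (fun y : ℝ => y ^ (a+1) * (1 - y) ^ (b+1)) 1
        - (fun y : ℝ => y ^ (a+1) * (1 - y) ^ (b+1)) 0 = 0 := by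
      simp [zero_pow (by omega : a + 1 ≠ 0)]
    rw [hz] at hint
    have int1 : IntervalIntegrable (fun x : ℝ => (a+1:ℝ) * x ^ a * (1 - x) ^ (b+1))
        MeasureTheory.volume 0 1 := by
      apply Continuous.intervalIntegrable; fun_prop
    have int2 : IntervalIntegrable (fun x : ℝ => (b+1:ℝ) * (x ^ (a+1) * (1 - x) ^ b))
        MeasureTheory.volume 0 1 := by
      apply Continuous.intervalIntegrable; fun_prop
    have hsub : ∫ x in (0:ℝ)..1,
        ((a+1:ℝ) * x ^ a * (1 - x) ^ (b+1) - (b+1:ℝ) * (x ^ (a+1) * (1 - x) ^ b))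
        = (a+1:ℝ) * (∫ x in (0:ℝ)..1, x ^ a * (1 - x) ^ (b+1))
          - (b+1:ℝ) * (∫ x in (0:ℝ)..1, x ^ (a+1) * (1 - x) ^ b) := by
      rw [integral_sub int1 int2, integral_const_mul]
      congr 1
      rw [← integral_const_mul]
      congr 1; ext x; ring
    rw [hsub] at hint
    have ha1 : ((a:ℝ)+1) ≠ 0 := by positivity
    have hb1 : ((b:ℝ)+1) ≠ 0 := by positivity
    have hkey : ((a:ℝ)+1) * (∫ x in (0:ℝ)..1, x ^ a * (1 - x) ^ (b+1))
        = ((b:ℝ)+1) * (((a+1).factorial : ℝ) * (b.factorial : ℝ)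
            / (((a+1) + b + 1).factorial : ℝ)) := by
      rw [← ih (a+1)]
      linarith
    have hF : (((a + (b+1) + 1).factorial : ℝ)) ≠ 0 := by
      exact_mod_cast (Nat.factorial_pos _).ne'
    have hFe : ((a+1) + b + 1) = (a + (b+1) + 1) := by omega
    rw [hFe] at hkey
    have hfa : (((a+1).factorial : ℕ) : ℝ) = ((a:ℝ)+1) * (a.factorial : ℝ) := by
      rw [Nat.factorial_succ]; push_cast; ring
    have hfb : (((b+1).factorial : ℕ) : ℝ) = ((b:ℝ)+1) * (b.factorial : ℝ) := by
      rw [Nat.factorial_succ]; push_cast; ring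
    rw [eq_div_iff hF]
    field_simp at hkey
    apply mul_left_cancel₀ ha1
    linear_combination hkey + ((b:ℝ)+1) * (b.factorial:ℝ) * hfa - ((a:ℝ)+1) * (a.factorial:ℝ) * hfb
lemma choose_fact (n k : ℕ) (hk : k ≤ n) :
    ((n.choose k : ℝ)) * k.factorial * (n - k).factorial = n.factorial := by
  exact_mod_cast congrArg (Nat.cast : ℕ → ℝ) (Nat.choose_mul_factorial_mul_factorial hk)

lemma fact_ne (m : ℕ) : ((m.factorial : ℕ) : ℝ) ≠ 0 := by
  exact_mod_cast (Nat.factorial_pos m).ne'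

lemma intJ (n k : ℕ) (hk : k ≤ n) (j : ℕ) :
    ∫ t in (0:ℝ)..1, t ^ j * bern n (k : ℤ) t
      = (n.choose k : ℝ) * ((k + j).factorial : ℝ) * ((n - k).factorial : ℝ)
          / ((n + j + 1).factorial : ℝ) := by
  have h1 : ∀ t : ℝ, t ^ j * bern n (k : ℤ) t
      = (n.choose k : ℝ) * (t ^ (k + j) * (1 - t) ^ ((n + j) - (k + j))) := by
    intro t
    rw [bern_nat n k hk t]
    have : (n + j) - (k + j) = n - k := by omega
    rw [this, pow_add]
    ring
  rw [intervalIntegral.integral_congr (fun t _ => h1 t), integral_const_mul, beta_nat]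
  have e1 : (n + j) - (k + j) = n - k := by omega
  have e2 : k + j + (n - k) + 1 = n + j + 1 := by omega
  rw [e1, e2]
  ring

lemma int_bern (n k : ℕ) (hk : k ≤ n) :
    ∫ t in (0:ℝ)..1, bern n (k : ℤ) t = 1 / ((n : ℝ) + 1) := by
  have h := intJ n k hk 0
  simp only [pow_zero, one_mul, Nat.add_zero] at h
  rw [h]
  rw [div_eq_div_iff (fact_ne _) (by positivity)]
  have : ((n+1).factorial : ℝ) = ((n:ℝ)+1) * n.factorial := by
    rw [Nat.factorial_succ]; push_cast; ring
  rw [this, one_mul, ← choose_fact n k hk]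
  ring

lemma mom_eq (n k : ℕ) (hk : k ≤ n) (c : ℝ) :
    ∫ t in (0:ℝ)..1, bern n (k : ℤ) t * (t - c) ^ 2
      = ((k:ℝ)+1) * ((k:ℝ)+2) / (((n:ℝ)+1) * ((n:ℝ)+2) * ((n:ℝ)+3))
        - 2 * c * ((k:ℝ)+1) / (((n:ℝ)+1) * ((n:ℝ)+2)) + c ^ 2 / ((n:ℝ)+1) := by
  have hJ1 : ∫ t in (0:ℝ)..1, t ^ 1 * bern n (k : ℤ) t
      = ((k:ℝ)+1) / (((n:ℝ)+1) * ((n:ℝ)+2)) := by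
    rw [intJ n k hk 1, div_eq_div_iff (fact_ne _) (by positivity)]
    have e1 : ((k+1).factorial : ℝ) = ((k:ℝ)+1) * k.factorial := by
      rw [Nat.factorial_succ]; push_cast; ring
    have e2 : ((n+1+1).factorial : ℝ) = ((n:ℝ)+2) * (((n:ℝ)+1) * n.factorial) := by
      rw [Nat.factorial_succ, Nat.factorial_succ]; push_cast; ring
    rw [e1, e2, ← choose_fact n k hk]
    ring
  have hJ2 : ∫ t in (0:ℝ)..1, t ^ 2 * bern n (k : ℤ) t
      = ((k:ℝ)+1) * ((k:ℝ)+2) / (((n:ℝ)+1) * ((n:ℝ)+2) * ((n:ℝ)+3)) := by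
    rw [intJ n k hk 2, div_eq_div_iff (fact_ne _) (by positivity)]
    have e1 : ((k+2).factorial : ℝ) = ((k:ℝ)+2) * (((k:ℝ)+1) * k.factorial) := by
      rw [Nat.factorial_succ, Nat.factorial_succ]; push_cast; ring
    have e2 : ((n+2+1).factorial : ℝ)
        = ((n:ℝ)+3) * (((n:ℝ)+2) * (((n:ℝ)+1) * n.factorial)) := by
      rw [Nat.factorial_succ, Nat.factorial_succ, Nat.factorial_succ]; push_cast; ring
    rw [e1, e2, ← choose_fact n k hk]
    ring
  have hJ0 := int_bern n k hk
  have hcont := bern_continuous n (k : ℤ)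
  have i2 : IntervalIntegrable (fun t : ℝ => t ^ 2 * bern n (k:ℤ) t) MeasureTheory.volume 0 1 :=
    ((continuous_pow 2).mul hcont).intervalIntegrable 0 1
  have i1 : IntervalIntegrable (fun t : ℝ => 2 * c * (t ^ 1 * bern n (k:ℤ) t))
      MeasureTheory.volume 0 1 :=
    (continuous_const.mul ((continuous_pow 1).mul hcont)).intervalIntegrable 0 1
  have i0 : IntervalIntegrable (fun t : ℝ => c ^ 2 * bern n (k:ℤ) t) MeasureTheory.volume 0 1 :=
    (continuous_const.mul hcont).intervalIntegrable 0 1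
  have hptw : ∀ t : ℝ, bern n (k:ℤ) t * (t - c) ^ 2
      = t ^ 2 * bern n (k:ℤ) t - 2 * c * (t ^ 1 * bern n (k:ℤ) t) + c ^ 2 * bern n (k:ℤ) t := by
    intro t; ring
  rw [intervalIntegral.integral_congr (fun t _ => hptw t), integral_add (i2.sub i1) i0,
    integral_sub i2 i1, integral_const_mul, integral_const_mul, hJ1, hJ2, hJ0]
  ring
lemma mom_bound1 (n k : ℕ) (hk : k ≤ n) :
    ∫ t in (0:ℝ)..1, bern n (k : ℤ) t * (t - ((k:ℝ)+1)/((n:ℝ)+2)) ^ 2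
      ≤ 2 / (((n:ℝ)+1) * ((n:ℝ)+3)) := by
  rw [mom_eq n k hk]
  have hn1 : (0:ℝ) < (n:ℝ)+1 := by positivity
  have hn2 : (0:ℝ) < (n:ℝ)+2 := by positivity
  have hn3 : (0:ℝ) < (n:ℝ)+3 := by positivity
  have hkn : (k:ℝ) ≤ (n:ℝ) := by exact_mod_cast hk
  have hk0 : (0:ℝ) ≤ (k:ℝ) := by positivity
  have key : ((k:ℝ)+1) * ((k:ℝ)+2) / (((n:ℝ)+1) * ((n:ℝ)+2) * ((n:ℝ)+3))
        - 2 * (((k:ℝ)+1)/((n:ℝ)+2)) * ((k:ℝ)+1) / (((n:ℝ)+1) * ((n:ℝ)+2))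
        + (((k:ℝ)+1)/((n:ℝ)+2)) ^ 2 / ((n:ℝ)+1)
      = ((k:ℝ)+1) * ((n:ℝ)+1-(k:ℝ)) / (((n:ℝ)+1) * ((n:ℝ)+2)^2 * ((n:ℝ)+3)) := by
    field_simp
    ring
  rw [key, div_le_div_iff₀ (by positivity) (by positivity)]
  have h1 : ((k:ℝ)+1) * ((n:ℝ)+1-(k:ℝ)) ≤ 2 * ((n:ℝ)+2)^2 := by
    nlinarith [sq_nonneg ((k:ℝ)+1-((n:ℝ)+1-(k:ℝ))), sq_nonneg ((n:ℝ)+2)]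
  calc ((k:ℝ)+1) * ((n:ℝ)+1-(k:ℝ)) * (((n:ℝ)+1) * ((n:ℝ)+3))
      ≤ (2 * ((n:ℝ)+2)^2) * (((n:ℝ)+1) * ((n:ℝ)+3)) :=
        mul_le_mul_of_nonneg_right h1 (by positivity)
    _ = 2 * (((n:ℝ)+1) * ((n:ℝ)+2)^2 * ((n:ℝ)+3)) := by ring

lemma mom_bound2 (n k : ℕ) (hk : k + 1 ≤ n) :
    ∫ t in (0:ℝ)..1, bern n ((k:ℤ)+1) t * (t - ((k:ℝ)+1)/((n:ℝ)+2)) ^ 2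
      ≤ 2 / (((n:ℝ)+1) * ((n:ℝ)+3)) := by
  have h := mom_eq n (k+1) hk (((k:ℝ)+1)/((n:ℝ)+2))
  push_cast at h
  rw [h]
  have hn1 : (0:ℝ) < (n:ℝ)+1 := by positivity
  have hn2 : (0:ℝ) < (n:ℝ)+2 := by positivity
  have hn3 : (0:ℝ) < (n:ℝ)+3 := by positivity
  have hkn : (k:ℝ) + 1 ≤ (n:ℝ) := by exact_mod_cast hk
  have hk0 : (0:ℝ) ≤ (k:ℝ) := by positivity
  have key : ((k:ℝ)+1+1) * ((k:ℝ)+1+2) / (((n:ℝ)+1) * ((n:ℝ)+2) * ((n:ℝ)+3))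
        - 2 * (((k:ℝ)+1)/((n:ℝ)+2)) * ((k:ℝ)+1+1) / (((n:ℝ)+1) * ((n:ℝ)+2))
        + (((k:ℝ)+1)/((n:ℝ)+2)) ^ 2 / ((n:ℝ)+1)
      = ((k:ℝ)+3) * ((n:ℝ)+1-(k:ℝ)) / (((n:ℝ)+1) * ((n:ℝ)+2)^2 * ((n:ℝ)+3)) := by
    field_simp
    ring
  rw [key, div_le_div_iff₀ (by positivity) (by positivity)]
  have h1 : ((k:ℝ)+3) * ((n:ℝ)+1-(k:ℝ)) ≤ 2 * ((n:ℝ)+2)^2 := by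
    nlinarith [sq_nonneg ((k:ℝ)+3-((n:ℝ)+1-(k:ℝ))), sq_nonneg ((n:ℝ)+2), hk0, hkn]
  calc ((k:ℝ)+3) * ((n:ℝ)+1-(k:ℝ)) * (((n:ℝ)+1) * ((n:ℝ)+3))
      ≤ (2 * ((n:ℝ)+2)^2) * (((n:ℝ)+1) * ((n:ℝ)+3)) :=
        mul_le_mul_of_nonneg_right h1 (by positivity)
    _ = 2 * (((n:ℝ)+1) * ((n:ℝ)+2)^2 * ((n:ℝ)+3)) := by ring
lemma sum_mom (n : ℕ) (x : ℝ) :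
    ∑ k ∈ Finset.range (n + 1), bern n (k : ℤ) x *
        (((k:ℝ)+1) * ((k:ℝ)+2) / (((n:ℝ)+1) * ((n:ℝ)+2) * ((n:ℝ)+3))
          - 2 * x * ((k:ℝ)+1) / (((n:ℝ)+1) * ((n:ℝ)+2)) + x ^ 2 / ((n:ℝ)+1))
      = ((2*(n:ℝ)-6) * x * (1-x) + 2) / (((n:ℝ)+1) * ((n:ℝ)+2) * ((n:ℝ)+3)) := by
  have expand : ∀ k : ℕ, bern n (k : ℤ) x *
        (((k:ℝ)+1) * ((k:ℝ)+2) / (((n:ℝ)+1) * ((n:ℝ)+2) * ((n:ℝ)+3))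
          - 2 * x * ((k:ℝ)+1) / (((n:ℝ)+1) * ((n:ℝ)+2)) + x ^ 2 / ((n:ℝ)+1))
      = ((k:ℝ) * ((k:ℝ)-1) * bern n (k:ℤ) x) * (1 / (((n:ℝ)+1) * ((n:ℝ)+2) * ((n:ℝ)+3)))
        + ((k:ℝ) * bern n (k:ℤ) x) *
            (4 / (((n:ℝ)+1) * ((n:ℝ)+2) * ((n:ℝ)+3)) - 2 * x / (((n:ℝ)+1) * ((n:ℝ)+2)))
        + bern n (k:ℤ) x * (2 / (((n:ℝ)+1) * ((n:ℝ)+2) * ((n:ℝ)+3))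
            - 2 * x / (((n:ℝ)+1) * ((n:ℝ)+2)) + x ^ 2 / ((n:ℝ)+1)) := by
    intro k; ring
  rw [Finset.sum_congr rfl (fun k _ => expand k)]
  rw [Finset.sum_add_distrib, Finset.sum_add_distrib, ← Finset.sum_mul, ← Finset.sum_mul,
    ← Finset.sum_mul, bern_sum, bern_sum_k, bern_sum_kk]
  have h1 : ((n:ℝ)+1) ≠ 0 := by positivity
  have h2 : ((n:ℝ)+2) ≠ 0 := by positivity
  have h3 : ((n:ℝ)+3) ≠ 0 := by positivity
  field_simp
  ring
lemma pascal (n : ℕ) (hn : 1 ≤ n) (k : ℕ) (hk : k ≤ n) (x : ℝ) :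
    bern n (k:ℤ) x = (1-x) * bern (n-1) (k:ℤ) x + x * bern (n-1) ((k:ℤ)-1) x := by
  rcases Nat.eq_zero_or_pos k with rfl | hkpos
  · rw [bern_nat n 0 (by omega), bern_nat (n-1) 0 (by omega),
      show ((0:ℕ):ℤ) - 1 = (-1 : ℤ) by norm_num, bern_of_neg (n-1) (-1) (by norm_num)]
    simp only [Nat.choose_zero_right, Nat.cast_one, pow_zero, Nat.sub_zero, one_mul, mul_zero,
      add_zero]
    conv_lhs => rw [show n = (n-1)+1 by omega]
    rw [pow_succ]
    ring
  · have hc : ((k:ℤ)-1) = ((k-1 : ℕ) : ℤ) := by omega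
    rcases eq_or_lt_of_le hk with rfl | hlt
    · rw [bern_nat k k le_rfl, bern_of_gt (k-1) (k:ℤ) (by omega), hc,
        bern_nat (k-1) (k-1) le_rfl]
      simp only [Nat.choose_self, Nat.cast_one, Nat.sub_self, pow_zero, mul_one, one_mul,
        mul_zero, zero_mul, zero_add]
      conv_lhs => rw [show k = (k-1)+1 by omega]
      rw [pow_succ]
      ring
    · have hkn : k ≤ n - 1 := by omega
      have hkn' : k - 1 ≤ n - 1 := by omega
      rw [bern_nat n k hk, bern_nat (n-1) k hkn, hc, bern_nat (n-1) (k-1) hkn']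
      have hch : (n.choose k : ℝ) = ((n-1).choose k : ℝ) + ((n-1).choose (k-1) : ℝ) := by
        rw [show n = (n-1)+1 by omega, show k = (k-1)+1 by omega, Nat.choose_succ_succ]
        push_cast
        rw [Nat.succ_eq_add_one, show (k-1)+1 = k by omega]
        ring
      have e1 : n - k = (n - 1 - k) + 1 := by omega
      have e2 : n - 1 - (k - 1) = n - k := by omega
      have ex : x ^ k = x * x ^ (k-1) := by
        conv_lhs => rw [show k = (k-1)+1 by omega]
        rw [pow_succ]; ring
      have eo : (1-x) ^ (n-k) = (1-x) * (1-x) ^ (n-1-k) := by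
        conv_lhs => rw [e1]
        rw [pow_succ]; ring
      rw [hch, e2, ex, eo]
      ring

lemma pM1_decomp (a0 a1 : ℕ → ℝ) (hA : ∀ n, 2 * a0 n + a1 n = 1) (n : ℕ) (hn : 1 ≤ n)
    (k : ℕ) (hk : k ≤ n) (x : ℝ) :
    pM1 a0 a1 n (k:ℤ) x = bern n (k:ℤ) x
      + ((a1 n + 1) * x + (a0 n - 1)) * (bern (n-1) (k:ℤ) x - bern (n-1) ((k:ℤ)-1) x) := by
  rw [pM1, pascal n hn k hk x]
  linear_combination (bern (n-1) ((k:ℤ)-1) x) * (hA n)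
lemma central (f : ℝ → ℝ) (hf : ContinuousOn f (Set.Icc 0 1)) (F ε K δ : ℝ) (hF : 0 ≤ F)
    (hFb : ∀ t ∈ Set.Icc (0:ℝ) 1, |f t| ≤ F) (hδ : 0 < δ) (hε : 0 < ε)
    (hKdef : K = 2*F/δ^2)
    (hmod : ∀ s ∈ Set.Icc (0:ℝ) 1, ∀ c ∈ Set.Icc (0:ℝ) 1, |s - c| ≤ δ → |f s - f c| ≤ ε)
    (n k : ℕ) (hk : k ≤ n) (c : ℝ) (hc : c ∈ Set.Icc (0:ℝ) 1) :
    |(∫ t in (0:ℝ)..1, bern n (k:ℤ) t * f t) - f c / ((n:ℝ)+1)|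
      ≤ ε/((n:ℝ)+1) + K * ∫ t in (0:ℝ)..1, bern n (k:ℤ) t * (t-c)^2 := by
  have hK0 : 0 ≤ K := by rw [hKdef]; positivity
  have huIcc : Set.uIcc (0:ℝ) 1 = Set.Icc 0 1 := Set.uIcc_of_le zero_le_one
  have hbc := bern_continuous n (k:ℤ)
  have hfint : IntervalIntegrable (fun t => bern n (k:ℤ) t * f t) MeasureTheory.volume 0 1 := by
    apply ContinuousOn.intervalIntegrable
    rw [huIcc]
    exact hbc.continuousOn.mul hf
  have hfcint : IntervalIntegrable (fun t => bern n (k:ℤ) t * f c) MeasureTheory.volume 0 1 :=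
    (hbc.mul continuous_const).intervalIntegrable 0 1
  have hbint : IntervalIntegrable (fun t => bern n (k:ℤ) t * (ε + K*(t-c)^2))
      MeasureTheory.volume 0 1 := by
    apply Continuous.intervalIntegrable
    fun_prop
  have hmod2 : ∀ t ∈ Set.Icc (0:ℝ) 1, |f t - f c| ≤ ε + K*(t-c)^2 := by
    intro t ht
    rcases le_or_gt |t - c| δ with h | h
    · have : 0 ≤ K*(t-c)^2 := by positivity
      linarith [hmod t ht c hc h]
    · have h2F : |f t - f c| ≤ 2*F := by
        calc |f t - f c| ≤ |f t| + |f c| := abs_sub _ _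
          _ ≤ 2*F := by linarith [hFb t ht, hFb c hc]
      have hsq : δ^2 ≤ (t-c)^2 := by
        have := abs_nonneg (t-c)
        nlinarith [sq_abs (t-c)]
      have hKd : K * δ^2 = 2*F := by
        rw [hKdef]
        field_simp
      have : K * δ^2 ≤ K * (t-c)^2 := mul_le_mul_of_nonneg_left hsq hK0
      linarith
  have hptw : ∀ t ∈ Set.Icc (0:ℝ) 1,
      |bern n (k:ℤ) t * f t - bern n (k:ℤ) t * f c| ≤ bern n (k:ℤ) t * (ε + K*(t-c)^2) := by
    intro t ht
    rw [← mul_sub, abs_mul, abs_of_nonneg (bern_nonneg n (k:ℤ) ht.1 ht.2)]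
    exact mul_le_mul_of_nonneg_left (hmod2 t ht) (bern_nonneg n (k:ℤ) ht.1 ht.2)
  have e0 : f c / ((n:ℝ)+1) = ∫ t in (0:ℝ)..1, bern n (k:ℤ) t * f c := by
    rw [integral_mul_const, int_bern n k hk]
    ring
  rw [e0, ← integral_sub hfint hfcint]
  have habs : |∫ t in (0:ℝ)..1, (bern n (k:ℤ) t * f t - bern n (k:ℤ) t * f c)|
      ≤ ∫ t in (0:ℝ)..1, bern n (k:ℤ) t * (ε + K*(t-c)^2) := by
    rw [abs_le]
    constructor
    · rw [← intervalIntegral.integral_neg]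
      apply integral_mono_on zero_le_one hbint.neg (hfint.sub hfcint)
      intro t ht
      have := hptw t ht
      rw [abs_le] at this
      simp only [Pi.neg_apply]
      linarith [this.1]
    · apply integral_mono_on zero_le_one (hfint.sub hfcint) hbint
      intro t ht
      have := hptw t ht
      rw [abs_le] at this
      linarith [this.2]
  refine habs.trans (le_of_eq ?_)
  have e1 : ∀ t : ℝ, bern n (k:ℤ) t * (ε + K*(t-c)^2)
      = ε * bern n (k:ℤ) t + K * (bern n (k:ℤ) t * (t-c)^2) := by
    intro t; ring
  rw [intervalIntegral.integral_congr (fun t _ => e1 t), integral_add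
    (show IntervalIntegrable (fun t => ε * bern n (k:ℤ) t) MeasureTheory.volume 0 1 from
      (continuous_const.mul hbc).intervalIntegrable 0 1)
    (by apply Continuous.intervalIntegrable; fun_prop),
    integral_const_mul, integral_const_mul, int_bern n k hk]
  ring

lemma mom_bound2' (n k : ℕ) (hk : k + 1 ≤ n) :
    ∫ t in (0:ℝ)..1, bern n ((k+1:ℕ) : ℤ) t * (t - ((k:ℝ)+1)/((n:ℝ)+2)) ^ 2
      ≤ 2 / (((n:ℝ)+1) * ((n:ℝ)+3)) := by
  have h : ((k+1:ℕ) : ℤ) = (k:ℤ)+1 := by push_cast; ring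
  rw [h]
  exact mom_bound2 n k hk

lemma sum_mom_le (n : ℕ) (x : ℝ) (hx0 : 0 ≤ x) (hx1 : x ≤ 1) :
    ((2*(n:ℝ)-6) * x * (1-x) + 2) / (((n:ℝ)+1) * ((n:ℝ)+2) * ((n:ℝ)+3))
      ≤ 2 / (((n:ℝ)+1)*((n:ℝ)+3)) := by
  rw [div_le_div_iff₀ (by positivity) (by positivity)]
  have hn0 : (0:ℝ) ≤ n := Nat.cast_nonneg n
  have hu0 : 0 ≤ x*(1-x) := mul_nonneg hx0 (by linarith)
  have hu4 : x*(1-x) ≤ 1/4 := by nlinarith [sq_nonneg (x - 1/2)]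
  have hnum : (2*(n:ℝ)-6)*x*(1-x) + 2 ≤ 2*((n:ℝ)+2) := by
    nlinarith [mul_le_mul_of_nonneg_left hu4 (by linarith : (0:ℝ) ≤ 2*(n:ℝ))]
  calc ((2*(n:ℝ)-6)*x*(1-x)+2) * (((n:ℝ)+1)*((n:ℝ)+3))
      ≤ (2*((n:ℝ)+2)) * (((n:ℝ)+1)*((n:ℝ)+3)) :=
        mul_le_mul_of_nonneg_right hnum (by positivity)
    _ = 2 * (((n:ℝ)+1)*((n:ℝ)+2)*((n:ℝ)+3)) := by ring

lemma main_est (a0 a1 : ℕ → ℝ) (hA : ∀ m, 2 * a0 m + a1 m = 1)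
    (f : ℝ → ℝ) (hf : ContinuousOn f (Set.Icc 0 1))
    (F ε K δ B : ℝ) (hF : 0 ≤ F)
    (hFb : ∀ t ∈ Set.Icc (0:ℝ) 1, |f t| ≤ F) (hδ : 0 < δ) (hε : 0 < ε)
    (hKdef : K = 2*F/δ^2)
    (hmod : ∀ s ∈ Set.Icc (0:ℝ) 1, ∀ c ∈ Set.Icc (0:ℝ) 1, |s - c| ≤ δ → |f s - f c| ≤ ε)
    (n : ℕ) (hn : 1 ≤ n) (hB0 : 0 ≤ B)
    (hcB : ∀ y ∈ Set.Icc (0:ℝ) 1, |(a1 n + 1)*y + (a0 n - 1)| ≤ B)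
    (x : ℝ) (hx : x ∈ Set.Icc (0:ℝ) 1) :
    |DM1 a0 a1 n f x - f x| ≤ (1+2*B)*ε + (2+4*B)*K/((n:ℝ)+3) := by
  have hK0 : 0 ≤ K := by rw [hKdef]; positivity
  have hn1 : (0:ℝ) < (n:ℝ)+1 := by positivity
  have hn3 : (0:ℝ) < (n:ℝ)+3 := by positivity
  set I : ℕ → ℝ := fun j => ∫ t in (0:ℝ)..1, bern n (j:ℤ) t * f t with hI
  set c : ℝ := (a1 n + 1)*x + (a0 n - 1) with hcdef
  -- decomposition
  have hshift : ∑ k ∈ Finset.range (n+1),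
        (bern (n-1) (k:ℤ) x - bern (n-1) ((k:ℤ)-1) x) * I k
      = ∑ k ∈ Finset.range n, bern (n-1) (k:ℤ) x * (I k - I (k+1)) := by
    have h1 : ∑ k ∈ Finset.range (n+1), bern (n-1) (k:ℤ) x * I k
        = ∑ k ∈ Finset.range n, bern (n-1) (k:ℤ) x * I k := by
      rw [Finset.sum_range_succ, bern_of_gt (n-1) (n:ℤ) (by omega) x, zero_mul, add_zero]
    have h2 : ∑ k ∈ Finset.range (n+1), bern (n-1) ((k:ℤ)-1) x * I k
        = ∑ k ∈ Finset.range n, bern (n-1) (k:ℤ) x * I (k+1) := by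
      rw [Finset.sum_range_succ']
      have hz : bern (n-1) (((0:ℕ):ℤ)-1) x = 0 := bern_of_neg _ _ (by norm_num) x
      rw [hz, zero_mul, add_zero]
      refine Finset.sum_congr rfl fun k hk => ?_
      rw [show (((k+1:ℕ)):ℤ)-1 = (k:ℤ) by push_cast; ring]
    have e : ∀ k ∈ Finset.range (n+1),
        (bern (n-1) (k:ℤ) x - bern (n-1) ((k:ℤ)-1) x) * I k
          = bern (n-1) (k:ℤ) x * I k - bern (n-1) ((k:ℤ)-1) x * I k :=
      fun k _ => by ring
    rw [Finset.sum_congr rfl e, Finset.sum_sub_distrib, h1, h2, ← Finset.sum_sub_distrib]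
    exact Finset.sum_congr rfl fun k _ => by ring
  have hdec : DM1 a0 a1 n f x
      = ((n:ℝ)+1) * (∑ k ∈ Finset.range (n+1), bern n (k:ℤ) x * I k)
        + c * (((n:ℝ)+1) * ∑ k ∈ Finset.range n, bern (n-1) (k:ℤ) x * (I k - I (k+1))) := by
    rw [DM1]
    have e : ∀ k ∈ Finset.range (n+1), pM1 a0 a1 n (k:ℤ) x * I k
        = bern n (k:ℤ) x * I k
          + c * ((bern (n-1) (k:ℤ) x - bern (n-1) ((k:ℤ)-1) x) * I k) := by
      intro k hk
      rw [pM1_decomp a0 a1 hA n hn k (Nat.lt_succ_iff.mp (Finset.mem_range.mp hk)) x, hcdef]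
      ring
    rw [Finset.sum_congr rfl e, Finset.sum_add_distrib, ← Finset.mul_sum, hshift]
    ring
  -- main term bound
  have hT1 : |((n:ℝ)+1) * (∑ k ∈ Finset.range (n+1), bern n (k:ℤ) x * I k) - f x|
      ≤ ε + 2*K/((n:ℝ)+3) := by
    have hs1 : ((n:ℝ)+1) * (∑ k ∈ Finset.range (n+1), bern n (k:ℤ) x * I k) - f x
        = ((n:ℝ)+1) * ∑ k ∈ Finset.range (n+1),
            bern n (k:ℤ) x * (I k - f x / ((n:ℝ)+1)) := by
      have e : ∀ k ∈ Finset.range (n+1), bern n (k:ℤ) x * (I k - f x / ((n:ℝ)+1))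
          = bern n (k:ℤ) x * I k - (f x / ((n:ℝ)+1)) * bern n (k:ℤ) x :=
        fun k _ => by ring
      rw [Finset.sum_congr rfl e, Finset.sum_sub_distrib, ← Finset.mul_sum, bern_sum]
      field_simp
    rw [hs1, abs_mul, abs_of_pos hn1]
    have hterm : ∀ k ∈ Finset.range (n+1), |bern n (k:ℤ) x * (I k - f x / ((n:ℝ)+1))|
        ≤ bern n (k:ℤ) x * (ε/((n:ℝ)+1)
            + K * ∫ t in (0:ℝ)..1, bern n (k:ℤ) t * (t-x)^2) := by
      intro k hk
      have hb0 := bern_nonneg n (k:ℤ) hx.1 hx.2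
      rw [abs_mul, abs_of_nonneg hb0]
      exact mul_le_mul_of_nonneg_left
        (central f hf F ε K δ hF hFb hδ hε hKdef hmod n k
          (Nat.lt_succ_iff.mp (Finset.mem_range.mp hk)) x hx) hb0
    have hsum : ∑ k ∈ Finset.range (n+1), bern n (k:ℤ) x * (ε/((n:ℝ)+1)
            + K * ∫ t in (0:ℝ)..1, bern n (k:ℤ) t * (t-x)^2)
        ≤ ε/((n:ℝ)+1) + K * (2 / (((n:ℝ)+1)*((n:ℝ)+3))) := by
      have e : ∀ k ∈ Finset.range (n+1), bern n (k:ℤ) x * (ε/((n:ℝ)+1)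
            + K * ∫ t in (0:ℝ)..1, bern n (k:ℤ) t * (t-x)^2)
          = (ε/((n:ℝ)+1)) * bern n (k:ℤ) x
            + K * (bern n (k:ℤ) x * ∫ t in (0:ℝ)..1, bern n (k:ℤ) t * (t-x)^2) :=
        fun k _ => by ring
      rw [Finset.sum_congr rfl e, Finset.sum_add_distrib, ← Finset.mul_sum, ← Finset.mul_sum,
        bern_sum, mul_one]
      have hm : ∑ k ∈ Finset.range (n+1),
            bern n (k:ℤ) x * ∫ t in (0:ℝ)..1, bern n (k:ℤ) t * (t-x)^2
          = ((2*(n:ℝ)-6) * x * (1-x) + 2) / (((n:ℝ)+1) * ((n:ℝ)+2) * ((n:ℝ)+3)) := by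
        have e2 : ∀ k ∈ Finset.range (n+1),
            bern n (k:ℤ) x * ∫ t in (0:ℝ)..1, bern n (k:ℤ) t * (t-x)^2
            = bern n (k:ℤ) x *
              (((k:ℝ)+1) * ((k:ℝ)+2) / (((n:ℝ)+1) * ((n:ℝ)+2) * ((n:ℝ)+3))
                - 2 * x * ((k:ℝ)+1) / (((n:ℝ)+1) * ((n:ℝ)+2)) + x ^ 2 / ((n:ℝ)+1)) := by
          intro k hk
          rw [mom_eq n k (Nat.lt_succ_iff.mp (Finset.mem_range.mp hk)) x]
        rw [Finset.sum_congr rfl e2, sum_mom]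
      rw [hm]
      have := sum_mom_le n x hx.1 hx.2
      nlinarith [this, hK0]
    calc ((n:ℝ)+1) * |∑ k ∈ Finset.range (n+1), bern n (k:ℤ) x * (I k - f x / ((n:ℝ)+1))|
        ≤ ((n:ℝ)+1) * (ε/((n:ℝ)+1) + K * (2 / (((n:ℝ)+1)*((n:ℝ)+3)))) := by
          apply mul_le_mul_of_nonneg_left _ hn1.le
          exact le_trans (Finset.abs_sum_le_sum_abs _ _)
            (le_trans (Finset.sum_le_sum hterm) hsum)
      _ = ε + 2*K/((n:ℝ)+3) := by field_simp
  -- extra term bound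
  have hT2 : |((n:ℝ)+1) * ∑ k ∈ Finset.range n, bern (n-1) (k:ℤ) x * (I k - I (k+1))|
      ≤ 2*ε + 4*K/((n:ℝ)+3) := by
    have hIk : ∀ k ∈ Finset.range n, |I k - I (k+1)|
        ≤ 2*ε/((n:ℝ)+1) + 4*K/(((n:ℝ)+1)*((n:ℝ)+3)) := by
      intro k hk
      have hkn : k + 1 ≤ n := Finset.mem_range.mp hk
      have hck : ((k:ℝ)+1)/((n:ℝ)+2) ∈ Set.Icc (0:ℝ) 1 := by
        constructor
        · positivity
        · rw [div_le_one (by positivity)]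
          have : (k:ℝ) ≤ (n:ℝ) := by exact_mod_cast (by omega : k ≤ n)
          linarith
      have h1 := central f hf F ε K δ hF hFb hδ hε hKdef hmod n k (by omega)
        (((k:ℝ)+1)/((n:ℝ)+2)) hck
      have h2 := central f hf F ε K δ hF hFb hδ hε hKdef hmod n (k+1) hkn
        (((k:ℝ)+1)/((n:ℝ)+2)) hck
      have hm1 := mom_bound1 n k (by omega)
      have hm2 := mom_bound2' n k hkn
      have habs : |I k - I (k+1)|
          ≤ |I k - f (((k:ℝ)+1)/((n:ℝ)+2)) / ((n:ℝ)+1)|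
            + |I (k+1) - f (((k:ℝ)+1)/((n:ℝ)+2)) / ((n:ℝ)+1)| := by
        have := abs_sub (I k - f (((k:ℝ)+1)/((n:ℝ)+2)) / ((n:ℝ)+1))
          (I (k+1) - f (((k:ℝ)+1)/((n:ℝ)+2)) / ((n:ℝ)+1))
        calc |I k - I (k+1)| = |(I k - f (((k:ℝ)+1)/((n:ℝ)+2)) / ((n:ℝ)+1))
            - (I (k+1) - f (((k:ℝ)+1)/((n:ℝ)+2)) / ((n:ℝ)+1))| := by ring_nf
          _ ≤ _ := this
      have hK1 : K * (∫ t in (0:ℝ)..1, bern n (k:ℤ) t * (t - ((k:ℝ)+1)/((n:ℝ)+2))^2)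
          ≤ K * (2 / (((n:ℝ)+1) * ((n:ℝ)+3))) := mul_le_mul_of_nonneg_left hm1 hK0
      have hK2 : K * (∫ t in (0:ℝ)..1, bern n ((k+1:ℕ):ℤ) t * (t - ((k:ℝ)+1)/((n:ℝ)+2))^2)
          ≤ K * (2 / (((n:ℝ)+1) * ((n:ℝ)+3))) := mul_le_mul_of_nonneg_left hm2 hK0
      have : 2*ε/((n:ℝ)+1) + 4*K/(((n:ℝ)+1)*((n:ℝ)+3))
          = (ε/((n:ℝ)+1) + K * (2 / (((n:ℝ)+1) * ((n:ℝ)+3))))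
            + (ε/((n:ℝ)+1) + K * (2 / (((n:ℝ)+1) * ((n:ℝ)+3)))) := by
        field_simp
        ring
      rw [this]
      exact habs.trans (add_le_add (h1.trans (by linarith)) (h2.trans (by linarith)))
    have hsumB : ∑ k ∈ Finset.range n, bern (n-1) (k:ℤ) x = 1 := by
      have := bern_sum (n-1) x
      rwa [show (n-1)+1 = n by omega] at this
    rw [abs_mul, abs_of_pos hn1]
    have hstep : |∑ k ∈ Finset.range n, bern (n-1) (k:ℤ) x * (I k - I (k+1))|
        ≤ 2*ε/((n:ℝ)+1) + 4*K/(((n:ℝ)+1)*((n:ℝ)+3)) := by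
      calc |∑ k ∈ Finset.range n, bern (n-1) (k:ℤ) x * (I k - I (k+1))|
          ≤ ∑ k ∈ Finset.range n, |bern (n-1) (k:ℤ) x * (I k - I (k+1))| :=
            Finset.abs_sum_le_sum_abs _ _
        _ ≤ ∑ k ∈ Finset.range n, bern (n-1) (k:ℤ) x
              * (2*ε/((n:ℝ)+1) + 4*K/(((n:ℝ)+1)*((n:ℝ)+3))) := by
            refine Finset.sum_le_sum fun k hk => ?_
            have hb0 := bern_nonneg (n-1) (k:ℤ) hx.1 hx.2
            rw [abs_mul, abs_of_nonneg hb0]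
            exact mul_le_mul_of_nonneg_left (hIk k hk) hb0
        _ = 2*ε/((n:ℝ)+1) + 4*K/(((n:ℝ)+1)*((n:ℝ)+3)) := by
            rw [← Finset.sum_mul, hsumB, one_mul]
    calc ((n:ℝ)+1) * |∑ k ∈ Finset.range n, bern (n-1) (k:ℤ) x * (I k - I (k+1))|
        ≤ ((n:ℝ)+1) * (2*ε/((n:ℝ)+1) + 4*K/(((n:ℝ)+1)*((n:ℝ)+3))) :=
          mul_le_mul_of_nonneg_left hstep hn1.le
      _ = 2*ε + 4*K/((n:ℝ)+3) := by field_simp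
  -- combine
  have hcB' : |c| ≤ B := hcB x hx
  calc |DM1 a0 a1 n f x - f x|
      = |(((n:ℝ)+1) * (∑ k ∈ Finset.range (n+1), bern n (k:ℤ) x * I k) - f x)
          + c * (((n:ℝ)+1) * ∑ k ∈ Finset.range n, bern (n-1) (k:ℤ) x * (I k - I (k+1)))| := by
        rw [hdec]; congr 1; ring
    _ ≤ |((n:ℝ)+1) * (∑ k ∈ Finset.range (n+1), bern n (k:ℤ) x * I k) - f x|
          + |c| * |((n:ℝ)+1) * ∑ k ∈ Finset.range n, bern (n-1) (k:ℤ) x * (I k - I (k+1))| := by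
        rw [← abs_mul]
        exact abs_add_le _ _
    _ ≤ (ε + 2*K/((n:ℝ)+3)) + B * (2*ε + 4*K/((n:ℝ)+3)) := by
        have h2 : |c| * |((n:ℝ)+1) * ∑ k ∈ Finset.range n,
              bern (n-1) (k:ℤ) x * (I k - I (k+1))| ≤ B * (2*ε + 4*K/((n:ℝ)+3)) :=
          mul_le_mul hcB' hT2 (abs_nonneg _) hB0
        linarith [hT1]
    _ = (1+2*B)*ε + (2+4*B)*K/((n:ℝ)+3) := by field_simp; ring

theorem DM1_uniform_convergence_nonpositive_case (a0 a1 : ℕ → ℝ) (l0 l1 : ℝ)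
    (hl0 : Tendsto a0 atTop (𝓝 l0)) (hl1 : Tendsto a1 atTop (𝓝 l1))
    (hA : ∀ n, 2 * a0 n + a1 n = 1)
    (hY2 : ∀ n, a0 n < 0 ∨ a1 n + a0 n < 0)
    (f : ℝ → ℝ) (hf : ContinuousOn f (Set.Icc 0 1)) :
    TendstoUniformlyOn (fun n x => DM1 a0 a1 n f x) f atTop (Set.Icc 0 1) := by
  obtain ⟨F, hFb⟩ : ∃ F, ∀ t ∈ Set.Icc (0:ℝ) 1, |f t| ≤ F := by
    obtain ⟨C, hC⟩ := isCompact_Icc.exists_bound_of_continuousOn hf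
    exact ⟨C, fun t ht => hC t ht⟩
  have hF0 : 0 ≤ F := le_trans (abs_nonneg _) (hFb 0 (by norm_num))
  have hu : UniformContinuousOn f (Set.Icc 0 1) :=
    isCompact_Icc.uniformContinuousOn_of_continuous hf
  rw [Metric.tendstoUniformlyOn_iff]
  intro ε0 hε0
  set B : ℝ := |l0| + |l1| + 4 with hBdef
  have hB0 : 0 < B := by positivity
  set ε : ℝ := ε0 / (2*(1+2*B)) with hεdef
  have hε : 0 < ε := by positivity
  obtain ⟨δ', hδ'0, hδ'⟩ := Metric.uniformContinuousOn_iff.mp hu ε hε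
  set δ : ℝ := δ'/2 with hδdef
  have hδ0 : 0 < δ := by positivity
  have hmod : ∀ s ∈ Set.Icc (0:ℝ) 1, ∀ c ∈ Set.Icc (0:ℝ) 1, |s - c| ≤ δ
      → |f s - f c| ≤ ε := by
    intro s hs c hc h
    have : dist s c < δ' := by
      rw [Real.dist_eq]
      linarith
    exact le_of_lt (by simpa [Real.dist_eq] using hδ' s hs c hc this)
  set K : ℝ := 2*F/δ^2 with hKdef
  have hK0 : 0 ≤ K := by positivity
  have hev0 : ∀ᶠ n in atTop, |a0 n - l0| < 1 :=
    (hl0.eventually (Metric.ball_mem_nhds l0 one_pos)).mono (by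
      intro n hn
      simpa [Real.dist_eq] using hn)
  have hev1 : ∀ᶠ n in atTop, |a1 n - l1| < 1 :=
    (hl1.eventually (Metric.ball_mem_nhds l1 one_pos)).mono (by
      intro n hn
      simpa [Real.dist_eq] using hn)
  have hevN : ∀ᶠ n : ℕ in atTop, (2+4*B)*K/((n:ℝ)+3) < ε0/2 := by
    have ht : Tendsto (fun n : ℕ => (2+4*B)*K/((n:ℝ)+3)) atTop (𝓝 0) := by
      apply Tendsto.div_atTop tendsto_const_nhds
      exact tendsto_atTop_add_const_right _ 3 tendsto_natCast_atTop_atTop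
    exact ht.eventually_lt_const (by positivity)
  filter_upwards [hev0, hev1, hevN, eventually_ge_atTop 1] with n h0 h1 hN hn1
  intro x hx
  rw [Real.dist_eq]
  have hcB : ∀ y ∈ Set.Icc (0:ℝ) 1, |(a1 n + 1)*y + (a0 n - 1)| ≤ B := by
    intro y hy
    have e0 : |a0 n| ≤ |l0| + 1 := by
      calc |a0 n| = |(a0 n - l0) + l0| := by ring_nf
        _ ≤ |a0 n - l0| + |l0| := abs_add_le _ _
        _ ≤ |l0| + 1 := by linarith
    have e1 : |a1 n| ≤ |l1| + 1 := by
      calc |a1 n| = |(a1 n - l1) + l1| := by ring_nf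
        _ ≤ |a1 n - l1| + |l1| := abs_add_le _ _
        _ ≤ |l1| + 1 := by linarith
    have h2 : |a0 n - 1| ≤ |a0 n| + 1 := by simpa using abs_sub (a0 n) (1:ℝ)
    have h3 : |a1 n + 1| ≤ |a1 n| + 1 := by simpa using abs_add_le (a1 n) (1:ℝ)
    have h4 : |y| ≤ 1 := by
      rw [abs_le]; exact ⟨by linarith [hy.1], hy.2⟩
    have h5 : |a1 n + 1| * |y| ≤ (|a1 n| + 1) * 1 :=
      mul_le_mul h3 h4 (abs_nonneg y) (by positivity)
    calc |(a1 n + 1)*y + (a0 n - 1)| ≤ |(a1 n + 1)*y| + |a0 n - 1| := abs_add_le _ _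
      _ ≤ B := by
          rw [abs_mul, hBdef]
          linarith
  have hest := main_est a0 a1 hA f hf F ε K δ B hF0 hFb hδ0 hε hKdef hmod n hn1 hB0.le hcB x hx
  have h1 : (1+2*B)*ε = ε0/2 := by
    rw [hεdef]
    field_simp
  calc |f x - DM1 a0 a1 n f x| = |DM1 a0 a1 n f x - f x| := abs_sub_comm _ _
    _ ≤ (1+2*B)*ε + (2+4*B)*K/((n:ℝ)+3) := hest
    _ < ε0 := by rw [h1]; linarith
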